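/- Let G be a finite simple graph on n vertices and H(G) its hairing. Then for every nonzero real number λ, χ_{H(G)}(λ) = λ^{2n} · (−1)^n · χ_{H(G)}(−1/λ), where χ denotes the characteristic polynomial of the adjacency matrix. -/

import Mathlib

open Polynomial

/-- The characteristic polynomial (of the adjacency matrix) of a finite simple graph. -/
noncomputable def charPoly {V : Type*} [Finite V] (G : SimpleGraph V) : Polynomial ℤ :=
  letI := Fintype.ofFinite V
  letI := Classical.decEq V
  letI := Classical.decRel G.Adj
  (SimpleGraph.adjMatrix ℤ G).charpoly

/-- The hairing of `G`: attach a pendant vertex to every vertex of `G`.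
Vertices `(u, false)` form the original graph and `(u, true)` is the pendant at `u`. -/
def hairing {V : Type*} (G : SimpleGraph V) : SimpleGraph (V × Bool) where
  Adj a b := (a.2 = false ∧ b.2 = false ∧ G.Adj a.1 b.1) ∨ (a.1 = b.1 ∧ a.2 ≠ b.2)
  symm := by
    constructor
    rintro a b (⟨ha, hb, hadj⟩ | ⟨h1, h2⟩)
    · exact Or.inl ⟨hb, ha, hadj.symm⟩
    · exact Or.inr ⟨h1.symm, h2.symm⟩
  loopless := by
    constructor
    rintro a (⟨_, _, hadj⟩ | ⟨_, h⟩)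
    · exact G.loopless.irrefl _ hadj
    · exact h rfl

lemma aeval_charpoly_int' {n : Type*} [Fintype n] [DecidableEq n] (M : Matrix n n ℤ) (r : ℝ) :
    aeval r M.charpoly = ((r • (1 : Matrix n n ℝ)) - M.map (Int.cast)).det := by
  have h1 : aeval r M.charpoly = eval r ((M.map (Int.castRingHom ℝ)).charpoly) := by
    rw [Matrix.charpoly_map, aeval_def, eval₂_eq_eval_map, algebraMap_int_eq]
  rw [h1, Matrix.charpoly, ← coe_evalRingHom, RingHom.map_det]
  congr 1
  ext i j
  by_cases h : i = j
  · subst h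
    simp [Matrix.charmatrix_apply_eq, Matrix.one_apply]
  · simp [Matrix.charmatrix_apply_ne _ _ _ h, Matrix.one_apply_ne h, h]

lemma det_key' {V : Type*} (G : SimpleGraph V) [Fintype V] [DecidableEq V]
    [Fintype (V × Bool)] [DecidableEq (V × Bool)]
    [DecidableRel G.Adj] [DecidableRel (hairing G).Adj] (r : ℝ) (hr : r ≠ 0) :
    (r • (1 : Matrix (V × Bool) (V × Bool) ℝ) - SimpleGraph.adjMatrix ℝ (hairing G)).det =
      r ^ Fintype.card V *
        ((r - 1 / r) • (1 : Matrix V V ℝ) - SimpleGraph.adjMatrix ℝ G).det := by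
  set A := SimpleGraph.adjMatrix ℝ G with hA
  set e : V × Bool ≃ V ⊕ V := (Equiv.prodComm V Bool).trans (Equiv.boolProdEquivSum V) with he
  rw [← Matrix.det_submatrix_equiv_self e.symm]
  have hsub : (r • (1 : Matrix (V × Bool) (V × Bool) ℝ)
        - SimpleGraph.adjMatrix ℝ (hairing G)).submatrix e.symm e.symm
      = Matrix.fromBlocks (r • 1 - A) (-1) (-1) (r • (1 : Matrix V V ℝ)) := by
    ext i j
    rcases i with u | u <;> rcases j with v | v <;>
      · simp only [Matrix.submatrix_apply, he, Equiv.symm_trans_apply,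
          Equiv.boolProdEquivSum_symm_apply, Sum.elim_inl, Sum.elim_inr, Equiv.prodComm_symm,
          Equiv.prodComm_apply, Prod.swap_prod_mk, Matrix.sub_apply, Matrix.smul_apply,
          Matrix.one_apply, SimpleGraph.adjMatrix_apply, hairing, Prod.mk.injEq,
          Matrix.fromBlocks_apply₁₁, Matrix.fromBlocks_apply₁₂, Matrix.fromBlocks_apply₂₁,
          Matrix.fromBlocks_apply₂₂, Matrix.neg_apply, hA, smul_eq_mul]
        by_cases h : u = v <;> by_cases hadj : G.Adj u v <;>
          simp_all [SimpleGraph.irrefl, SimpleGraph.adjMatrix, Matrix.of_apply]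
  rw [hsub]
  haveI : Invertible (r • (1 : Matrix V V ℝ)) :=
    ⟨r⁻¹ • (1 : Matrix V V ℝ), by rw [smul_mul_smul_comm, one_mul, inv_mul_cancel₀ hr, one_smul],
      by rw [smul_mul_smul_comm, one_mul, mul_inv_cancel₀ hr, one_smul]⟩
  rw [Matrix.det_fromBlocks₂₂]
  have hinv : ⅟ (r • (1 : Matrix V V ℝ)) = r⁻¹ • (1 : Matrix V V ℝ) := by
    apply invOf_eq_right_inv
    rw [smul_mul_smul_comm, one_mul, mul_inv_cancel₀ hr, one_smul]
  rw [hinv]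
  have h1 : (-1 : Matrix V V ℝ) * (r⁻¹ • (1 : Matrix V V ℝ)) * (-1) = r⁻¹ • 1 := by
    simp
  rw [h1]
  have h2 : (r • (1 : Matrix V V ℝ) - A) - r⁻¹ • 1 = (r - 1 / r) • (1 : Matrix V V ℝ) - A := by
    rw [sub_smul]
    simp [one_div]
    abel
  rw [h2, Matrix.det_smul, Matrix.det_one, mul_one]

/-- For a finite simple graph `G` on `n` vertices and every nonzero real `λ`,
`χ_{H(G)}(λ) = λ^(2n) · (-1)^n · χ_{H(G)}(-1/λ)`. -/
theorem charPoly_hairing_functional_equation {V : Type*} [Finite V] (G : SimpleGraph V)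
    (lam : ℝ) (hlam : lam ≠ 0) :
    Polynomial.aeval lam (charPoly (hairing G)) =
      lam ^ (2 * Nat.card V) * (-1) ^ (Nat.card V) *
        Polynomial.aeval (-(1 / lam)) (charPoly (hairing G)) := by
  letI : Fintype V := Fintype.ofFinite V
  letI : DecidableEq V := Classical.decEq V
  letI : DecidableRel G.Adj := Classical.decRel _
  letI : Fintype (V × Bool) := Fintype.ofFinite (V × Bool)
  letI : DecidableEq (V × Bool) := Classical.decEq (V × Bool)
  letI : DecidableRel (hairing G).Adj := Classical.decRel _
  have hmap : (SimpleGraph.adjMatrix ℤ (hairing G)).map (Int.cast : ℤ → ℝ)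
      = SimpleGraph.adjMatrix ℝ (hairing G) := by
    ext i j
    simp [Matrix.map_apply, SimpleGraph.adjMatrix_apply, apply_ite (Int.cast : ℤ → ℝ)]
  have key : ∀ r : ℝ, r ≠ 0 → Polynomial.aeval r (charPoly (hairing G))
      = r ^ Fintype.card V
        * ((r - 1 / r) • (1 : Matrix V V ℝ) - SimpleGraph.adjMatrix ℝ G).det := by
    intro r hr
    have hdef : charPoly (hairing G) = (SimpleGraph.adjMatrix ℤ (hairing G)).charpoly := rfl
    rw [hdef, aeval_charpoly_int', hmap, det_key' G r hr]
  have hμ : (-(1 / lam)) ≠ 0 := by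
    simpa using hlam
  have hscal : (-(1 / lam)) - 1 / (-(1 / lam)) = lam - 1 / lam := by
    have h3 : (1 : ℝ) / (-(1 / lam)) = -lam := by
      rw [one_div, one_div, neg_inv, inv_inv]
    rw [h3]
    ring
  rw [key lam hlam, key _ hμ, hscal, Nat.card_eq_fintype_card]
  set n := Fintype.card V
  set D := ((lam - 1 / lam) • (1 : Matrix V V ℝ) - SimpleGraph.adjMatrix ℝ G).det
  have hc : lam ^ (2 * n) * (-1 : ℝ) ^ n * (-(1 / lam)) ^ n = lam ^ n := by
    have h5 : lam ^ n * (lam⁻¹) ^ n = 1 := by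
      rw [← mul_pow, mul_inv_cancel₀ hlam, one_pow]
    rw [one_div, two_mul, pow_add, mul_assoc, ← mul_pow, ← mul_pow, ← mul_pow]
    congr 1
    field_simp
  calc lam ^ n * D = lam ^ (2 * n) * (-1 : ℝ) ^ n * (-(1 / lam)) ^ n * D := by rw [hc]
    _ = lam ^ (2 * n) * (-1) ^ n * ((-(1 / lam)) ^ n * D) := by ring
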